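/- Let d ≥ 1 and let X be a real spherical t-design on S^{2d−1} consisting of N distinct points. If t = 2k+1 is odd, then N ≥ 2·binom(2d+k−1, 2d−1); if t = 2k is even, then N ≥ binom(2d+k−1, 2d−1) + binom(2d+k−2, 2d−1). -/

import Mathlib

noncomputable section
open MeasureTheory Metric MvPolynomial ENNReal

/-- The real unit sphere `S^{n-1} ⊆ ℝ^n`. -/
abbrev RSph (n : ℕ) : Type := Metric.sphere (0 : EuclideanSpace ℝ (Fin n)) 1

def rsMap {n : ℕ} (f : EuclideanSpace ℝ (Fin n) ≃ₗᵢ[ℝ] EuclideanSpace ℝ (Fin n))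
    (x : RSph n) : RSph n :=
  ⟨f x, by
    have hx := x.2
    simp only [mem_sphere_iff_norm, sub_zero] at hx ⊢
    simp [hx]⟩

/-- `σ` is the uniform (rotation invariant) probability measure on the real unit sphere. -/
def IsUniformR {n : ℕ} (σm : Measure (RSph n)) : Prop :=
  IsProbabilityMeasure σm ∧
    ∀ f : EuclideanSpace ℝ (Fin n) ≃ₗᵢ[ℝ] EuclideanSpace ℝ (Fin n),
      Measure.map (rsMap f) σm = σm

def evalR {n : ℕ} (p : MvPolynomial (Fin n) ℝ) (x : RSph n) : ℝ :=
  MvPolynomial.eval (fun j => (x : EuclideanSpace ℝ (Fin n)) j) p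

/-- A finite family of points of the real sphere is a real spherical `t`-design. -/
def IsRealDesign {n : ℕ} (σm : Measure (RSph n)) (t : ℕ)
    {ι : Type} [Fintype ι] (x : ι → RSph n) : Prop :=
  ∀ p : MvPolynomial (Fin n) ℝ, p.totalDegree ≤ t →
    (Fintype.card ι : ℝ)⁻¹ * ∑ i, evalR p (x i) = ∫ y, evalR p y ∂σm

lemma continuous_rsMap {n : ℕ} (f : EuclideanSpace ℝ (Fin n) ≃ₗᵢ[ℝ] EuclideanSpace ℝ (Fin n)) :
    Continuous (rsMap f) :=
  Continuous.subtype_mk (f.continuous.comp continuous_subtype_val) _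

lemma continuous_evalR {n : ℕ} (p : MvPolynomial (Fin n) ℝ) :
    Continuous (evalR (n := n) p) := by
  apply (MvPolynomial.continuous_eval p).comp
  apply continuous_pi
  intro j
  exact ((continuous_apply j).comp (PiLp.continuous_ofLp 2 fun _ : Fin n => ℝ)).comp
    continuous_subtype_val

lemma integrable_evalR {n : ℕ} (σm : Measure (RSph n)) [IsFiniteMeasure σm]
    (p : MvPolynomial (Fin n) ℝ) : Integrable (evalR p) σm := by
  apply (continuous_evalR p).integrable_of_hasCompactSupport
  exact IsCompact.of_isClosed_subset isCompact_univ (isClosed_tsupport _) (Set.subset_univ _)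

lemma uniform_isOpenPos {n : ℕ} (σm : Measure (RSph n)) (hσ : IsUniformR σm) :
    σm.IsOpenPosMeasure := by
  haveI := hσ.1
  constructor
  intro U hU hne hzero
  obtain ⟨x₀, hx₀U⟩ := hne
  have key : ∀ y : RSph n, ∃ V : Set (RSph n), IsOpen V ∧ y ∈ V ∧ σm V = 0 := by
    intro y
    have hnorm : ‖(y : EuclideanSpace ℝ (Fin n))‖ = ‖(x₀ : EuclideanSpace ℝ (Fin n))‖ := by
      have h1 := y.2; have h2 := x₀.2
      rw [mem_sphere_iff_norm, sub_zero] at h1 h2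
      rw [h1, h2]
    set g := (Submodule.reflection (ℝ ∙ ((y : EuclideanSpace ℝ (Fin n)) - (x₀ : EuclideanSpace ℝ (Fin n))))ᗮ :
      EuclideanSpace ℝ (Fin n) ≃ₗᵢ[ℝ] EuclideanSpace ℝ (Fin n)) with hg
    have hgy : rsMap g y = x₀ := Subtype.ext (Submodule.reflection_sub hnorm)
    refine ⟨(rsMap g) ⁻¹' U, hU.preimage (continuous_rsMap g), ?_, ?_⟩
    · show rsMap g y ∈ U
      rw [hgy]; exact hx₀U
    · have := hσ.2 g
      calc σm ((rsMap g) ⁻¹' U) = (Measure.map (rsMap g) σm) U := by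
            rw [Measure.map_apply (continuous_rsMap g).measurable hU.measurableSet]
        _ = σm U := by rw [this]
        _ = 0 := hzero
  choose V hVopen hVmem hVzero using key
  obtain ⟨s, hs⟩ := isCompact_univ.elim_finite_subcover V hVopen
    (fun y _ => Set.mem_iUnion.mpr ⟨y, hVmem y⟩)
  have : σm Set.univ = 0 := by
    refine le_antisymm ?_ zero_le
    calc σm Set.univ ≤ σm (⋃ y ∈ s, V y) := measure_mono hs
      _ ≤ ∑ y ∈ s, σm (V y) := measure_biUnion_finset_le s V
      _ = 0 := by simp [hVzero]
  rw [measure_univ] at this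
  exact one_ne_zero this


-- scaling lemma
lemma eval_homog_smul {n : ℕ} {p : MvPolynomial (Fin n) ℝ} {m : ℕ} (hp : p.IsHomogeneous m)
    (c : ℝ) (y : Fin n → ℝ) :
    MvPolynomial.eval (fun j => c * y j) p = c ^ m * MvPolynomial.eval y p := by
  rw [MvPolynomial.eval_eq', MvPolynomial.eval_eq', Finset.mul_sum]
  refine Finset.sum_congr rfl fun d hd => ?_
  have hdeg : ∑ i, d i = m := by
    have h1 := hp (MvPolynomial.mem_support_iff.mp hd)
    rw [Pi.one_def, ← Finsupp.degree_eq_weight_one] at h1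
    rw [← h1, Finsupp.degree_apply]
    refine (Finset.sum_subset (Finset.subset_univ _) ?_).symm
    · intro i _ hi
      simpa using Finsupp.notMem_support_iff.mp hi
  calc MvPolynomial.coeff d p * ∏ i, (c * y i) ^ d i
      = MvPolynomial.coeff d p * ((∏ i, c ^ d i) * ∏ i, y i ^ d i) := by
        rw [← Finset.prod_mul_distrib]; simp [mul_pow]
    _ = c ^ m * (MvPolynomial.coeff d p * ∏ i, y i ^ d i) := by
        rw [Finset.prod_pow_eq_pow_sum]
        rw [hdeg]; ring

-- cardinality equiv
def degEquivSym (n k : ℕ) : ↥{d : Fin n →₀ ℕ | Finsupp.degree d = k} ≃ Sym (Fin n) k where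
  toFun d := ⟨Finsupp.toMultiset d.1, by
    rw [Finsupp.card_toMultiset]
    have h : Finsupp.degree d.1 = k := d.2
    rw [Finsupp.degree_apply] at h
    exact h⟩
  invFun m := ⟨Multiset.toFinsupp m.1, by
    show Finsupp.degree _ = k
    rw [Finsupp.degree_apply]
    have := Multiset.toFinsupp_sum_eq m.1
    rw [Finsupp.sum] at this
    simp only [id] at this
    rw [this]
    exact m.2⟩
  left_inv d := by ext1; simp
  right_inv m := by ext1; simp

instance degFintype (n k : ℕ) : Fintype ↥{d : Fin n →₀ ℕ | Finsupp.degree d = k} :=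
  Fintype.ofEquiv _ (degEquivSym n k).symm

lemma card_deg (n k : ℕ) :
    Fintype.card ↥{d : Fin n →₀ ℕ | Finsupp.degree d = k} = (n + k - 1).choose k := by
  rw [Fintype.card_congr (degEquivSym n k), Sym.card_sym_eq_choose, Fintype.card_fin]

lemma homog_eq_restrict (n k : ℕ) :
    homogeneousSubmodule (Fin n) ℝ k = restrictSupport ℝ {d | Finsupp.degree d = k} :=
  homogeneousSubmodule_eq_finsupp_supported (Fin n) ℝ k

instance homogFinDim (n k : ℕ) : FiniteDimensional ℝ (homogeneousSubmodule (Fin n) ℝ k) := by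
  rw [homog_eq_restrict]
  exact Module.Finite.of_basis (basisRestrictSupport ℝ _)

lemma finrank_homog (n k : ℕ) :
    Module.finrank ℝ (homogeneousSubmodule (Fin n) ℝ k) = (n + k - 1).choose k := by
  rw [homog_eq_restrict, Module.finrank_eq_card_basis (basisRestrictSupport ℝ _)]
  exact card_deg n k


lemma negRS {n : ℕ} (y : RSph n) : (-(y : EuclideanSpace ℝ (Fin n))) ∈
    Metric.sphere (0 : EuclideanSpace ℝ (Fin n)) 1 := by
  have h1 := y.2
  rw [mem_sphere_iff_norm, sub_zero] at h1 ⊢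
  rw [norm_neg]; exact h1

lemma evalR_neg_point {n : ℕ} {p : MvPolynomial (Fin n) ℝ} {m : ℕ} (hp : p.IsHomogeneous m)
    (y : RSph n) : evalR p ⟨-(y : EuclideanSpace ℝ (Fin n)), negRS y⟩ = (-1) ^ m * evalR p y := by
  show MvPolynomial.eval _ p = _
  have : (fun j => (-(y : EuclideanSpace ℝ (Fin n))) j) = fun j => (-1 : ℝ) * (y : EuclideanSpace ℝ (Fin n)) j := by
    funext j; simp
  rw [this, eval_homog_smul hp]
  rfl

lemma integral_odd_homog {n : ℕ} (σm : Measure (RSph n)) (hσ : IsUniformR σm)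
    {p : MvPolynomial (Fin n) ℝ} {m : ℕ} (hm : Odd m) (hp : p.IsHomogeneous m) :
    ∫ y, evalR p y ∂σm = 0 := by
  haveI := hσ.1
  set f := (LinearIsometryEquiv.neg ℝ : EuclideanSpace ℝ (Fin n) ≃ₗᵢ[ℝ] EuclideanSpace ℝ (Fin n))
  have hmap := hσ.2 f
  have h1 : ∫ y, evalR p y ∂σm = ∫ y, evalR p (rsMap f y) ∂σm := by
    conv_lhs => rw [← hmap]
    rw [integral_map (continuous_rsMap f).measurable.aemeasurable
      ((continuous_evalR p).aestronglyMeasurable)]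
  have h2 : ∀ y : RSph n, evalR p (rsMap f y) = - evalR p y := by
    intro y
    have : rsMap f y = ⟨-(y : EuclideanSpace ℝ (Fin n)), negRS y⟩ := by
      apply Subtype.ext; rfl
    rw [this, evalR_neg_point hp, hm.neg_one_pow]
    ring
  simp_rw [h2] at h1
  rw [integral_neg] at h1
  linarith

lemma sq_integral_zero {n : ℕ} (σm : Measure (RSph n)) (hσ : IsUniformR σm)
    (p : MvPolynomial (Fin n) ℝ) (h : ∫ y, (evalR p y) ^ 2 ∂σm = 0) :
    ∀ y : RSph n, evalR p y = 0 := by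
  haveI := hσ.1
  haveI := uniform_isOpenPos σm hσ
  have hint : Integrable (fun y => (evalR p y) ^ 2) σm := by
    have h2 : (fun y => (evalR p y) ^ 2) = evalR (p * p) := by
      funext y; simp [evalR, sq, map_mul]
    rw [h2]
    exact integrable_evalR σm (p * p)
  have hae := (integral_eq_zero_iff_of_nonneg (fun y => sq_nonneg _) hint).mp h
  have hcont : Continuous fun y : RSph n => (evalR p y) ^ 2 := (continuous_evalR p).pow 2
  have heq : (fun y : RSph n => (evalR p y) ^ 2) = fun _ => (0 : ℝ) :=
    (Continuous.ae_eq_iff_eq σm hcont continuous_const).mp hae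
  intro y
  have := congrFun heq y
  exact pow_eq_zero_iff (by norm_num) |>.mp this

lemma homog_eq_zero_of_sphere {n : ℕ} (hn : 1 ≤ n) {p : MvPolynomial (Fin n) ℝ} {m : ℕ}
    (hp : p.IsHomogeneous m) (h : ∀ y : RSph n, evalR p y = 0) : p = 0 := by
  apply hp.eq_zero_of_forall_eval_eq_zero
  intro z
  by_cases hz : (WithLp.equiv 2 (Fin n → ℝ)).symm z = 0
  · -- z = 0 as a function
    have hz' : ∀ j, z j = 0 := by
      intro j
      have := congrFun (congrArg (WithLp.equiv 2 (Fin n → ℝ)) hz) j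
      simpa using this
    set e : EuclideanSpace ℝ (Fin n) := EuclideanSpace.single ⟨0, hn⟩ (1 : ℝ) with he
    have hmem : e ∈ Metric.sphere (0 : EuclideanSpace ℝ (Fin n)) 1 := by
      rw [mem_sphere_iff_norm, sub_zero, he, EuclideanSpace.norm_single]
      norm_num
    have h0 : z = fun j => (0 : ℝ) * e j := by funext j; rw [hz' j]; ring
    rw [h0, eval_homog_smul hp]
    have := h ⟨e, hmem⟩
    rw [evalR] at this
    rw [this]
    ring
  · set v : EuclideanSpace ℝ (Fin n) := (WithLp.equiv 2 (Fin n → ℝ)).symm z with hv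
    have hvn : ‖v‖ ≠ 0 := by simpa using hz
    set u : EuclideanSpace ℝ (Fin n) := ‖v‖⁻¹ • v with hu
    have hmem : u ∈ Metric.sphere (0 : EuclideanSpace ℝ (Fin n)) 1 := by
      rw [mem_sphere_iff_norm, sub_zero, hu, norm_smul]
      simp [norm_inv, inv_mul_cancel₀ hvn]
    have h0 : z = fun j => ‖v‖ * u j := by
      funext j
      rw [hu]
      show z j = ‖v‖ * (‖v‖⁻¹ * v j)
      rw [← mul_assoc, mul_inv_cancel₀ hvn, one_mul]
      rfl
    rw [h0, eval_homog_smul hp]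
    have := h ⟨u, hmem⟩
    rw [evalR] at this
    rw [this]
    ring

lemma homog_pair_zero {n : ℕ} (hn : 1 ≤ n) {p q : MvPolynomial (Fin n) ℝ} {a b : ℕ}
    (hp : p.IsHomogeneous a) (hq : q.IsHomogeneous b) (hab : a % 2 ≠ b % 2)
    (h : ∀ y : RSph n, evalR p y + evalR q y = 0) : p = 0 ∧ q = 0 := by
  have hpt : ∀ y : RSph n, evalR p y = 0 ∧ evalR q y = 0 := by
    intro y
    have h1 := h y
    have h2 := h ⟨-(y : EuclideanSpace ℝ (Fin n)), negRS y⟩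
    rw [evalR_neg_point hp, evalR_neg_point hq] at h2
    rcases Nat.even_or_odd a with ha | ha
    · have hb : Odd b := by
        rcases Nat.even_or_odd b with hb | hb
        · exfalso; apply hab; rw [Nat.even_iff.mp ha, Nat.even_iff.mp hb]
        · exact hb
      rw [ha.neg_one_pow, hb.neg_one_pow] at h2
      constructor <;> nlinarith [h1, h2]
    · have hb : Even b := by
        rcases Nat.even_or_odd b with hb | hb
        · exact hb
        · exfalso; apply hab; rw [Nat.odd_iff.mp ha, Nat.odd_iff.mp hb]
      rw [ha.neg_one_pow, hb.neg_one_pow] at h2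
      constructor <;> nlinarith [h1, h2]
  exact ⟨homog_eq_zero_of_sphere hn hp (fun y => (hpt y).1),
    homog_eq_zero_of_sphere hn hq (fun y => (hpt y).2)⟩

def evalFam {n N : ℕ} (x : Fin N → RSph n) : MvPolynomial (Fin n) ℝ →ₗ[ℝ] (Fin N → ℝ) where
  toFun p := fun i => evalR p (x i)
  map_add' p q := by funext i; simp [evalR, map_add]
  map_smul' c p := by funext i; simp [evalR, MvPolynomial.smul_eval]

-- linear polynomial with coefficients e
def Lpoly {n : ℕ} (e : Fin n → ℝ) : MvPolynomial (Fin n) ℝ :=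
  ∑ j, MvPolynomial.C (e j) * MvPolynomial.X j

lemma Lpoly_homog {n : ℕ} (e : Fin n → ℝ) : (Lpoly e).IsHomogeneous 1 := by
  rw [← mem_homogeneousSubmodule]
  apply Submodule.sum_mem
  intro j _
  rw [mem_homogeneousSubmodule]
  simpa using (isHomogeneous_C (Fin n) (e j)).mul (isHomogeneous_X ℝ j)

lemma eval_Lpoly {n : ℕ} (e y : Fin n → ℝ) :
    MvPolynomial.eval y (Lpoly e) = ∑ j, e j * y j := by
  simp [Lpoly]

lemma Lpoly_ne_zero {n : ℕ} {v : Fin n → ℝ} (hv : v ≠ 0) : Lpoly v ≠ 0 := by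
  intro h
  apply hv
  have h2 : MvPolynomial.eval v (Lpoly v) = 0 := by rw [h]; simp
  rw [eval_Lpoly] at h2
  have h3 : ∀ j ∈ Finset.univ, v j * v j = 0 := by
    intro j _
    have := (Finset.sum_eq_zero_iff_of_nonneg (fun j _ => mul_self_nonneg (v j))).mp h2
    exact this j (Finset.mem_univ j)
  funext j
  have := h3 j (Finset.mem_univ j)
  exact mul_self_eq_zero.mp this

lemma exists_good_e {n N : ℕ} (x : Fin N → RSph n) :
    ∃ e : Fin n → ℝ, ∀ i,
      MvPolynomial.eval (fun j => (x i : EuclideanSpace ℝ (Fin n)) j) (Lpoly e) ≠ 0 := by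
  have hv : ∀ i, (fun j => (x i : EuclideanSpace ℝ (Fin n)) j) ≠ 0 := by
    intro i hv
    have h1 := (x i).2
    rw [mem_sphere_iff_norm, sub_zero, EuclideanSpace.norm_eq] at h1
    have h2 : ∀ j, (x i : EuclideanSpace ℝ (Fin n)) j = 0 := fun j => congrFun hv j
    simp only [h2] at h1
    norm_num at h1
  set Q := ∏ i, Lpoly (fun j => (x i : EuclideanSpace ℝ (Fin n)) j) with hQdef
  have hQ : Q ≠ 0 := Finset.prod_ne_zero_iff.mpr fun i _ => Lpoly_ne_zero (hv i)
  have he : ∃ e : Fin n → ℝ, MvPolynomial.eval e Q ≠ 0 := by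
    by_contra hc
    push_neg at hc
    exact hQ (MvPolynomial.funext fun e => by rw [hc e]; simp)
  obtain ⟨e, he⟩ := he
  refine ⟨e, fun i => ?_⟩
  rw [hQdef, map_prod] at he
  have hfac := Finset.prod_ne_zero_iff.mp he i (Finset.mem_univ i)
  rw [eval_Lpoly] at hfac
  rw [eval_Lpoly]
  intro hzero
  apply hfac
  rw [← hzero]
  exact Finset.sum_congr rfl fun j _ => mul_comm _ _

lemma bound_even {n N m : ℕ} (hn : 1 ≤ n) (σm : Measure (RSph n)) (hσ : IsUniformR σm)
    (x : Fin N → RSph n) (hdes : IsRealDesign σm (2*(m+1)) x) :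
    (n + m).choose (m + 1) + (n + m - 1).choose m ≤ N := by
  haveI := hσ.1
  classical
  set H1 := homogeneousSubmodule (Fin n) ℝ (m+1)
  set H2 := homogeneousSubmodule (Fin n) ℝ m
  set T : (H1 × H2) →ₗ[ℝ] (Fin N → ℝ) :=
    (evalFam x).comp (LinearMap.coprod H1.subtype H2.subtype) with hT
  have hinjT : Function.Injective T := by
    rw [← LinearMap.ker_eq_bot, Submodule.eq_bot_iff]
    rintro ⟨p, q⟩ hz
    rw [LinearMap.mem_ker] at hz
    have hz' : ∀ i, evalR ((p : MvPolynomial (Fin n) ℝ) + (q : MvPolynomial (Fin n) ℝ)) (x i) = 0 :=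
      fun i => congrFun hz i
    set P := (p : MvPolynomial (Fin n) ℝ)
    set Q := (q : MvPolynomial (Fin n) ℝ)
    have hdeg : ((P + Q) * (P + Q)).totalDegree ≤ 2 * (m+1) := by
      refine le_trans (totalDegree_mul _ _) ?_
      have h1 : (P + Q).totalDegree ≤ m + 1 := by
        refine le_trans (totalDegree_add _ _) (max_le p.2.totalDegree_le
          (le_trans q.2.totalDegree_le (Nat.le_succ m)))
      omega
    have hdes2 := hdes _ hdeg
    have hsum : ∀ i, evalR ((P + Q) * (P + Q)) (x i) = 0 := by
      intro i
      have := hz' i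
      simp only [evalR, map_mul] at *
      rw [this]; ring
    rw [Finset.sum_congr rfl (fun i _ => hsum i)] at hdes2
    simp only [Finset.sum_const_zero, mul_zero] at hdes2
    have hint : ∫ y, (evalR (P + Q) y) ^ 2 ∂σm = 0 := by
      have hfun : (fun y : RSph n => (evalR (P + Q) y) ^ 2) = evalR ((P + Q) * (P + Q)) := by
        funext y; simp [evalR, map_mul, sq]
      rw [hfun, ← hdes2]
    have hvan := sq_integral_zero σm hσ (P + Q) hint
    have hpq : P = 0 ∧ Q = 0 := by
      refine homog_pair_zero hn p.2 q.2 (by omega) fun y => ?_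
      have := hvan y
      simpa [evalR, map_add] using this
    have hp0 : p = 0 := Subtype.ext hpq.1
    have hq0 : q = 0 := Subtype.ext hpq.2
    rw [hp0, hq0]; rfl
  haveI : Module.Finite ℝ H1 := homogFinDim n (m+1)
  haveI : Module.Finite ℝ H2 := homogFinDim n m
  haveI : Module.Free ℝ H1 := Module.Free.of_divisionRing ℝ _
  haveI : Module.Free ℝ H2 := Module.Free.of_divisionRing ℝ _
  have hrank := LinearMap.finrank_le_finrank_of_injective hinjT
  rw [Module.finrank_prod] at hrank
  have e1 : Module.finrank ℝ H1 = (n + m).choose (m+1) := by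
    have := finrank_homog n (m+1)
    rwa [show n + (m+1) - 1 = n + m by omega] at this
  have e2 : Module.finrank ℝ H2 = (n + m - 1).choose m := by
    have := finrank_homog n m
    rwa [show n + m - 1 = n + m - 1 from rfl] at this
  rw [e1, e2, Module.finrank_pi] at hrank
  simpa using hrank

lemma bound_odd {n N k : ℕ} (hn : 1 ≤ n) (σm : Measure (RSph n)) (hσ : IsUniformR σm)
    (x : Fin N → RSph n) (hdes : IsRealDesign σm (2*k+1) x) :
    2 * (n + k - 1).choose k ≤ N := by
  haveI := hσ.1
  classical
  obtain ⟨e, he⟩ := exists_good_e x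
  set L := Lpoly e with hLdef
  have hL1 : L.IsHomogeneous 1 := Lpoly_homog e
  set H := homogeneousSubmodule (Fin n) ℝ k with hH
  set T : (H × H) →ₗ[ℝ] (Fin N → ℝ) :=
    (evalFam x).comp (LinearMap.coprod H.subtype ((LinearMap.mulLeft ℝ L).comp H.subtype))
    with hT
  have hinjT : Function.Injective T := by
    rw [← LinearMap.ker_eq_bot, Submodule.eq_bot_iff]
    rintro ⟨p, q⟩ hz
    rw [LinearMap.mem_ker] at hz
    set P := (p : MvPolynomial (Fin n) ℝ)
    set Q := (q : MvPolynomial (Fin n) ℝ)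
    have hz' : ∀ i, evalR (P + L * Q) (x i) = 0 := fun i => congrFun hz i
    have hPd : P.totalDegree ≤ k := p.2.totalDegree_le
    have hQd : Q.totalDegree ≤ k := q.2.totalDegree_le
    have hLd : L.totalDegree ≤ 1 := hL1.totalDegree_le
    -- step 1 : P = 0
    have hdegPQ : (P + L * Q).totalDegree ≤ k + 1 := by
      refine le_trans (totalDegree_add _ _) (max_le (le_trans hPd (Nat.le_succ k)) ?_)
      refine le_trans (totalDegree_mul _ _) ?_
      omega
    have hdeg1 : ((P + L * Q) * P).totalDegree ≤ 2 * k + 1 := by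
      refine le_trans (totalDegree_mul _ _) ?_
      omega
    have hdes1 := hdes _ hdeg1
    have hsum1 : ∀ i, evalR ((P + L * Q) * P) (x i) = 0 := by
      intro i
      have := hz' i
      simp only [evalR, map_mul] at this ⊢
      rw [this, zero_mul]
    rw [Finset.sum_congr rfl (fun i _ => hsum1 i)] at hdes1
    simp only [Finset.sum_const_zero, mul_zero] at hdes1
    -- split the integral
    have hsplit : ∫ y, evalR ((P + L * Q) * P) y ∂σm
        = (∫ y, (evalR P y) ^ 2 ∂σm) + ∫ y, evalR (L * Q * P) y ∂σm := by
      have hfun : (fun y : RSph n => evalR ((P + L * Q) * P) y)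
          = fun y => (evalR P y) ^ 2 + evalR (L * Q * P) y := by
        funext y; simp only [evalR, map_mul, map_add, sq]; ring
      rw [hfun]
      refine integral_add ?_ (integrable_evalR σm _)
      have hfun2 : (fun y : RSph n => (evalR P y) ^ 2) = evalR (P * P) := by
        funext y; simp [evalR, map_mul, sq]
      rw [hfun2]
      exact integrable_evalR σm _
    have hodd : ∫ y, evalR (L * Q * P) y ∂σm = 0 := by
      have hhom : (L * Q * P).IsHomogeneous (2 * k + 1) := by
        have h3 := (hL1.mul q.2).mul p.2
        rwa [show 1 + k + k = 2 * k + 1 by omega] at h3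
      exact integral_odd_homog σm hσ ⟨k, by omega⟩ hhom
    have hPint : ∫ y, (evalR P y) ^ 2 ∂σm = 0 := by
      rw [← hdes1] at hsplit
      rw [hodd] at hsplit
      linarith
    have hP0 : P = 0 :=
      homog_eq_zero_of_sphere hn p.2 (sq_integral_zero σm hσ P hPint)
    -- step 2 : Q = 0
    have hq0 : ∀ i, evalR Q (x i) = 0 := by
      intro i
      have h1 := hz' i
      rw [hP0] at h1
      simp only [evalR, map_add, map_mul, map_zero, zero_add] at h1
      exact (mul_eq_zero.mp h1).resolve_left (he i)
    have hdeg2 : (Q * Q).totalDegree ≤ 2 * k + 1 := by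
      refine le_trans (totalDegree_mul _ _) ?_
      omega
    have hdes2 := hdes _ hdeg2
    have hsum2 : ∀ i, evalR (Q * Q) (x i) = 0 := by
      intro i
      have := hq0 i
      simp only [evalR, map_mul] at this ⊢
      rw [this, zero_mul]
    rw [Finset.sum_congr rfl (fun i _ => hsum2 i)] at hdes2
    simp only [Finset.sum_const_zero, mul_zero] at hdes2
    have hQint : ∫ y, (evalR Q y) ^ 2 ∂σm = 0 := by
      have hfun : (fun y : RSph n => (evalR Q y) ^ 2) = evalR (Q * Q) := by
        funext y; simp [evalR, map_mul, sq]
      rw [hfun, ← hdes2]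
    have hQ0 : Q = 0 :=
      homog_eq_zero_of_sphere hn q.2 (sq_integral_zero σm hσ Q hQint)
    have : p = 0 := Subtype.ext hP0
    have h2 : q = 0 := Subtype.ext hQ0
    rw [this, h2]; rfl
  haveI : Module.Finite ℝ H := homogFinDim n k
  haveI : Module.Free ℝ H := Module.Free.of_divisionRing ℝ _
  have hrank := LinearMap.finrank_le_finrank_of_injective hinjT
  rw [Module.finrank_prod, finrank_homog, Module.finrank_pi] at hrank
  simpa [two_mul] using hrank

lemma choose_flip (b c : ℕ) : (b + c).choose b = (b + c).choose c := by
  have h := Nat.choose_symm (Nat.le_add_right b c)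
  rw [Nat.add_sub_cancel_left] at h
  exact h.symm

/-- lower bounds on the number of points of a real spherical `t`-design
on `S^{2d-1}`. -/
theorem design_point_lower_bound (d t N : ℕ) (hd : 1 ≤ d)
    (σm : Measure (RSph (2 * d))) (hσ : IsUniformR σm)
    (x : Fin N → RSph (2 * d)) (hinj : Function.Injective x)
    (hdes : IsRealDesign σm t x) :
    ∀ k : ℕ, (t = 2 * k + 1 → 2 * Nat.choose (2 * d + k - 1) (2 * d - 1) ≤ N) ∧
      (t = 2 * k →
        Nat.choose (2 * d + k - 1) (2 * d - 1) + Nat.choose (2 * d + k - 2) (2 * d - 1) ≤ N) := by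
  intro k
  have hn : 1 ≤ 2 * d := by omega
  haveI := hσ.1
  constructor
  · intro ht
    subst ht
    have hb := bound_odd hn σm hσ x hdes
    have heq : (2 * d + k - 1).choose (2 * d - 1) = (2 * d + k - 1).choose k := by
      rw [show 2 * d + k - 1 = (2 * d - 1) + k by omega]
      exact choose_flip _ _
    rw [heq]
    exact hb
  · intro ht
    subst ht
    match k with
    | 0 =>
      have hN : 1 ≤ N := by
        by_contra hc
        push_neg at hc
        have hN0 : N = 0 := by omega
        subst hN0
        have h1 := hdes 1 (by simp)
        have h2 : evalR (1 : MvPolynomial (Fin (2 * d)) ℝ) = fun _ => (1 : ℝ) := by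
          funext y; simp [evalR]
        rw [h2] at h1
        simp only [Fintype.card_fin, Nat.cast_zero, Finset.sum_const, integral_const,
          measure_univ, ENNReal.toReal_one, one_smul] at h1
        norm_num at h1
      have hz : (2 * d + 0 - 2).choose (2 * d - 1) = 0 :=
        Nat.choose_eq_zero_of_lt (by omega)
      have ho : (2 * d + 0 - 1).choose (2 * d - 1) = 1 := by
        rw [show 2 * d + 0 - 1 = 2 * d - 1 by omega, Nat.choose_self]
      rw [hz, ho]
      omega
    | m + 1 =>
      have hb := bound_even hn σm hσ x hdes
      have heq1 : (2 * d + (m + 1) - 1).choose (2 * d - 1) = (2 * d + m).choose (m + 1) := by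
        rw [show 2 * d + (m + 1) - 1 = (2 * d - 1) + (m + 1) by omega]
        rw [choose_flip]
        congr 1
        omega
      have heq2 : (2 * d + (m + 1) - 2).choose (2 * d - 1) = (2 * d + m - 1).choose m := by
        rw [show 2 * d + (m + 1) - 2 = (2 * d - 1) + m by omega]
        rw [choose_flip]
        congr 1
        omega
      rw [heq1, heq2]
      exact hb
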